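/- With x_k ∈ R[z] defined by the Hessenberg determinant formula over R = ℚ[t₁, t₂, t₃, …], and Q_n := det(x_{2i−1}(z+j−1))_{i,j=1,…,n} the Casoratian of x₁, x₃, …, x_{2n−1}, the polynomial Q_n does not depend on any even-indexed variable: for every n ≥ 1 and every p ≥ 1, the formal partial derivative of Q_n with respect to t_{2p} is zero (equivalently, every coefficient of Q_n, as a polynomial in z over R, has vanishing partial derivative with respect to t_{2p}). -/

import Mathlib

open Polynomial

noncomputable section

/-- The base ring `R = ℚ[t₁, t₂, t₃, …]`: polynomials in countably many
variables `t_j = MvPolynomial.X j` (only indices `j ≥ 1` occur). -/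
abbrev Rt : Type := MvPolynomial ℕ ℚ

/-- `z_j := (-1)^{j+1} (z + t_j)` as an element of `R[z]`. -/
def zj (j : ℕ) : Polynomial Rt :=
  (-1) ^ (j + 1) * (X + C (MvPolynomial.X j))

/-- The `k×k` lower Hessenberg matrix `M_k` with (1-indexed) entries
`(M_k)_{IJ} = z_{I-J+1}` for `J ≤ I`, `(M_k)_{I,I+1} = -I`, and `0` otherwise.
Below `i j : Fin k` are 0-indexed, i.e. `I = i+1`, `J = j+1`. -/
def Mhess (k : ℕ) : Matrix (Fin k) (Fin k) (Polynomial Rt) :=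
  Matrix.of fun i j =>
    if (j : ℕ) ≤ (i : ℕ) then zj ((i : ℕ) - (j : ℕ) + 1)
    else if (j : ℕ) = (i : ℕ) + 1 then -(((i : ℕ) + 1 : ℕ) : Polynomial Rt)
    else 0

/-- `x₀ := 1` and `x_k := (1/k!) det M_k` for `k ≥ 1`; these satisfy
`x_k(z+1) - x_k(z) = x_{k-1}(z)` and have generating function
`exp (Σ_{k≥1} (-1)^{k+1} (z+t_k) u^k / k)`. -/
def xpoly (k : ℕ) : Polynomial Rt :=
  if k = 0 then 1
  else C (MvPolynomial.C ((k.factorial : ℚ)⁻¹)) * (Mhess k).det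

/-- `Q_n := det (x_{2i-1}(z+j-1))_{i,j=1,…,n}`, the Casoratian of
`x₁, x₃, …, x_{2n-1}` (here `i j : Fin n` are 0-indexed, so the row function is
`x_{2i+1}` and the `j`-th column is composition with `z + j`); `Q 0 = 1`. -/
def Qcas (n : ℕ) : Polynomial Rt :=
  Matrix.det (Matrix.of fun i j : Fin n =>
    (xpoly (2 * (i : ℕ) + 1)).comp (X + C ((j : ℕ) : Rt)))

/-- `q_k := Q_k(0) ∈ R` (so `q 0 = 1 = q₀`). -/
def qval (k : ℕ) : Rt := (Qcas k).eval 0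

end

noncomputable section AuxProof

abbrev eOpt : MvPolynomial (Option ℕ) ℚ ≃ₐ[ℚ] Polynomial Rt := MvPolynomial.optionEquivLeft ℚ ℕ

def pD (v : ℕ) (f : Polynomial Rt) : Polynomial Rt :=
  eOpt (MvPolynomial.pderiv (some v) (eOpt.symm f))

lemma pD_add (v : ℕ) (f g : Polynomial Rt) : pD v (f + g) = pD v f + pD v g := by
  simp [pD, map_add]

lemma pD_mul (v : ℕ) (f g : Polynomial Rt) : pD v (f * g) = pD v f * g + f * pD v g := by
  simp only [pD, map_mul, Derivation.leibniz, smul_eq_mul, map_add,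
    AlgEquiv.apply_symm_apply]
  ring

lemma eOpt_rename (a : Rt) : eOpt (MvPolynomial.rename some a) = C a := by
  induction a using MvPolynomial.induction_on with
  | C q => simp [eOpt, MvPolynomial.rename_C, MvPolynomial.optionEquivLeft_C]
  | add p q hp hq => simp [map_add, hp, hq]
  | mul_X p n hp =>
      rw [map_mul, MvPolynomial.rename_X, map_mul, hp,
        MvPolynomial.optionEquivLeft_X_some, map_mul]

lemma pD_C (v : ℕ) (a : Rt) : pD v (C a) = C (MvPolynomial.pderiv v a) := by
  have h : eOpt.symm (C a) = MvPolynomial.rename some a := by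
    rw [AlgEquiv.symm_apply_eq, eOpt_rename]
  rw [pD, h, MvPolynomial.pderiv_rename (Option.some_injective ℕ), eOpt_rename]

lemma pD_X (v : ℕ) : pD v (X : Polynomial Rt) = 0 := by
  have h : eOpt.symm X = MvPolynomial.X none := by
    rw [AlgEquiv.symm_apply_eq, eOpt, MvPolynomial.optionEquivLeft_X_none]
  rw [pD, h, MvPolynomial.pderiv_X_of_ne (by simp), map_zero]

lemma pD_one (v : ℕ) : pD v (1 : Polynomial Rt) = 0 := by
  have := pD_C v 1
  simpa using this

lemma pD_zero (v : ℕ) : pD v (0 : Polynomial Rt) = 0 := by simp [pD]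

lemma pD_C_mul_Xpow (v : ℕ) (a : Rt) (n : ℕ) :
    pD v (C a * X ^ n) = C (MvPolynomial.pderiv v a) * X ^ n := by
  induction n with
  | zero => simpa using pD_C v a
  | succ n ih =>
      rw [pow_succ, ← mul_assoc, pD_mul, ih, pD_X, mul_zero, add_zero, mul_assoc, ← pow_succ]

lemma pD_coeff (v : ℕ) (f : Polynomial Rt) (m : ℕ) :
    (pD v f).coeff m = MvPolynomial.pderiv v (f.coeff m) := by
  induction f using Polynomial.induction_on with
  | C a => rw [pD_C]; simp [coeff_C]; split <;> simp
  | add p q hp hq => simp [pD_add, hp, hq]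
  | monomial n a _ =>
      rw [pD_C_mul_Xpow]
      simp only [coeff_C_mul, coeff_X_pow]
      split <;> simp

lemma pD_sum {ι : Type*} (v : ℕ) (s : Finset ι) (f : ι → Polynomial Rt) :
    pD v (∑ i ∈ s, f i) = ∑ i ∈ s, pD v (f i) := by
  classical
  induction s using Finset.induction_on with
  | empty => simp [pD_zero]
  | insert a s ha ih => simp [Finset.sum_insert ha, pD_add, ih]

lemma pD_prod {ι : Type*} [DecidableEq ι] (v : ℕ) (s : Finset ι) (f : ι → Polynomial Rt) :
    pD v (∏ i ∈ s, f i) = ∑ i ∈ s, pD v (f i) * ∏ j ∈ s.erase i, f j := by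
  classical
  induction s using Finset.induction_on with
  | empty => simp [pD_one]
  | insert a s ha ih =>
      rw [Finset.prod_insert ha, pD_mul, ih, Finset.sum_insert ha,
        Finset.erase_insert ha, Finset.mul_sum]
      refine congrArg (fun x : Polynomial Rt => _ + x) ?_
      refine Finset.sum_congr rfl fun i hi => ?_
      rw [Finset.erase_insert_of_ne (by rintro rfl; exact ha hi),
        Finset.prod_insert (fun h => ha (Finset.mem_of_mem_erase h))]
      ring

lemma pD_zsmul (v : ℕ) (z : ℤ) (f : Polynomial Rt) : pD v (z • f) = z • pD v f := by
  simp [pD, map_zsmul]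

set_option maxHeartbeats 2000000 in
lemma pD_det {n : ℕ} (v : ℕ) (A : Matrix (Fin n) (Fin n) (Polynomial Rt)) :
    pD v A.det = ∑ r : Fin n, (A.updateRow r fun j => pD v (A r j)).det := by
  classical
  rw [Matrix.det_apply, pD_sum]
  have hterm : ∀ σ : Equiv.Perm (Fin n),
      pD v (Equiv.Perm.sign σ • ∏ c, A (σ c) c)
        = Equiv.Perm.sign σ • ∑ c : Fin n, pD v (A (σ c) c) * ∏ j ∈ Finset.univ.erase c, A (σ j) j := by
    intro σ
    rw [Units.smul_def, Units.smul_def, pD_zsmul, pD_prod]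
  rw [Finset.sum_congr rfl fun σ _ => hterm σ]
  have hrhs : ∀ r : Fin n, (A.updateRow r fun j => pD v (A r j)).det
      = ∑ σ : Equiv.Perm (Fin n), Equiv.Perm.sign σ •
          (pD v (A r (σ.symm r)) * ∏ j ∈ Finset.univ.erase (σ.symm r), A (σ j) j) := by
    intro r
    rw [Matrix.det_apply]
    refine Finset.sum_congr rfl fun σ _ => ?_
    congr 1
    have hfun : (fun c => A.updateRow r (fun j => pD v (A r j)) (σ c) c)
        = Function.update (fun c => A (σ c) c) (σ.symm r) (pD v (A r (σ.symm r))) := by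
      funext c
      by_cases hc : c = σ.symm r
      · subst hc
        simp [Matrix.updateRow_apply, Function.update_self]
      · have : σ c ≠ r := fun h => hc (by simp [← h])
        simp [Matrix.updateRow_apply, this, Function.update_of_ne hc]
    rw [hfun, Finset.prod_update_of_mem (Finset.mem_univ _), Finset.erase_eq]
  rw [Finset.sum_congr rfl fun r _ => hrhs r, Finset.sum_comm]
  refine Finset.sum_congr rfl fun σ _ => ?_
  rw [← Finset.smul_sum]
  congr 1
  refine Fintype.sum_equiv σ _ _ fun c => ?_
  simp

def cst (q : ℚ) : Polynomial Rt := C (MvPolynomial.C q)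

lemma cst_mul (a b : ℚ) : cst a * cst b = cst (a * b) := by
  rw [cst, cst, cst, ← map_mul, ← map_mul]

lemma cst_add (a b : ℚ) : cst a + cst b = cst (a + b) := by
  rw [cst, cst, cst, ← map_add, ← map_add]

lemma cst_one : cst 1 = 1 := by simp [cst]

lemma cst_zero : cst 0 = 0 := by simp [cst]

lemma pD_cst (v : ℕ) (q : ℚ) : pD v (cst q) = 0 := by
  rw [cst, pD_C, MvPolynomial.pderiv_C, map_zero]

lemma cst_cancel {q : ℚ} (hq : q ≠ 0) {a b : Polynomial Rt}
    (h : cst q * a = cst q * b) : a = b := by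
  have h2 := congrArg (fun x => cst q⁻¹ * x) h
  simpa [← mul_assoc, cst_mul, inv_mul_cancel₀ hq, cst_one] using h2

lemma pD_natCast (v : ℕ) (n : ℕ) : pD v ((n : Polynomial Rt)) = 0 := by
  have : ((n : Polynomial Rt)) = cst n := by simp [cst]
  rw [this, pD_cst]

lemma pD_zj (p : ℕ) (n : ℕ) :
    pD (2 * p) (zj n) = if n = 2 * p then -1 else 0 := by
  have hpow : ((-1 : Polynomial Rt) ^ (n + 1)) = cst ((-1) ^ (n + 1)) := by
    simp [cst, map_pow]
  rw [zj, pD_mul, hpow, pD_cst, zero_mul, zero_add, pD_add, pD_X, zero_add, pD_C]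
  by_cases h : n = 2 * p
  · subst h
    rw [MvPolynomial.pderiv_X_self, if_pos rfl]
    have : ((-1 : ℚ) ^ (2 * p + 1)) = -1 := Odd.neg_one_pow ⟨p, by ring⟩
    simp [cst, this]
  · rw [MvPolynomial.pderiv_X_of_ne (by exact fun hh => h hh), if_neg h]
    simp

def Ah (k m : ℕ) : Matrix (Fin k) (Fin k) (Polynomial Rt) :=
  Matrix.of fun i j => if (i : ℕ) + 1 = k then zj (m - (j : ℕ)) else Mhess k i j

lemma Mhess_eq_Ah (k : ℕ) : Mhess k = Ah k k := by
  refine Matrix.ext fun i j => ?_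
  simp only [Ah, Mhess, Matrix.of_apply]
  have hj := j.isLt
  by_cases h : (i : ℕ) + 1 = k
  · rw [if_pos h, if_pos (by omega : (j : ℕ) ≤ (i : ℕ))]
    congr 1
    omega
  · rw [if_neg h]

lemma Ah_sub1 (k m : ℕ) :
    (Ah (k+1) m).submatrix Fin.castSucc Fin.castSucc = Mhess k := by
  refine Matrix.ext fun i j => ?_
  have hi := i.isLt
  simp only [Matrix.submatrix_apply, Ah, Mhess, Matrix.of_apply, Fin.coe_castSucc]
  rw [if_neg (by omega : ¬ (i : ℕ) + 1 = k + 1)]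

lemma Ah_sub2 (k m : ℕ) :
    (Ah (k+2) m).submatrix ((Fin.last k).castSucc).succAbove Fin.castSucc
      = Ah (k+1) m := by
  refine Matrix.ext fun r c => ?_
  have hr := r.isLt
  have hc := c.isLt
  by_cases h : (r : ℕ) < k
  · have hlt : r.castSucc < (Fin.last k).castSucc := by
      simp only [Fin.lt_def, Fin.coe_castSucc, Fin.val_last]
      exact h
    rw [Matrix.submatrix_apply, Fin.succAbove_of_castSucc_lt _ _ hlt]
    simp only [Ah, Mhess, Matrix.of_apply, Fin.coe_castSucc]
    rw [if_neg (by omega : ¬ (r : ℕ) + 1 = k + 2),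
      if_neg (by omega : ¬ (r : ℕ) + 1 = k + 1)]
  · have hrk : (r : ℕ) = k := by omega
    have hle : (Fin.last k).castSucc ≤ r.castSucc := by
      simp only [Fin.le_def, Fin.coe_castSucc, Fin.val_last]
      omega
    rw [Matrix.submatrix_apply, Fin.succAbove_of_le_castSucc _ _ hle]
    simp only [Ah, Matrix.of_apply, Fin.val_succ, Fin.coe_castSucc]
    rw [if_pos (by omega : (r : ℕ) + 1 + 1 = k + 2),
      if_pos (by omega : (r : ℕ) + 1 = k + 1)]

lemma Ah_det_one (m : ℕ) : (Ah 1 m).det = zj m := by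
  rw [Matrix.det_fin_one]
  simp [Ah]

lemma Ah_rec (k m : ℕ) :
    (Ah (k+2) m).det = zj (m - (k+1)) * (Mhess (k+1)).det
      + ((k+1 : ℕ) : Polynomial Rt) * (Ah (k+1) m).det := by
  rw [Matrix.det_succ_column (Ah (k+2) m) (Fin.last (k+1)),
    Fin.sum_univ_castSucc, Fin.sum_univ_castSucc]
  have h0 : ∀ i : Fin k,
      Ah (k+2) m ((i.castSucc).castSucc) (Fin.last (k+1)) = 0 := by
    intro i
    have hi := i.isLt
    simp only [Ah, Mhess, Matrix.of_apply, Fin.coe_castSucc, Fin.val_last]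
    rw [if_neg (by omega : ¬ (i : ℕ) + 1 = k + 2),
      if_neg (by omega : ¬ (k + 1 : ℕ) ≤ (i : ℕ)),
      if_neg (by omega : ¬ (k + 1 : ℕ) = (i : ℕ) + 1)]
  have hsum0 : ∑ i : Fin k, (-1) ^ (((i.castSucc).castSucc : Fin (k+2)) + (Fin.last (k+1)) : ℕ) *
      Ah (k+2) m ((i.castSucc).castSucc) (Fin.last (k+1)) *
      ((Ah (k+2) m).submatrix ((i.castSucc).castSucc).succAbove
        (Fin.last (k+1)).succAbove).det = 0 := by
    refine Finset.sum_eq_zero fun i _ => ?_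
    rw [h0 i, mul_zero, zero_mul]
  rw [hsum0, zero_add]
  have hA1 : Ah (k+2) m ((Fin.last k).castSucc) (Fin.last (k+1))
      = -((k + 1 : ℕ) : Polynomial Rt) := by
    simp only [Ah, Mhess, Matrix.of_apply, Fin.coe_castSucc, Fin.val_last]
    rw [if_neg (by omega : ¬ (k : ℕ) + 1 = k + 2),
      if_neg (by omega : ¬ (k + 1 : ℕ) ≤ (k : ℕ))]
    simp
  have hA2 : Ah (k+2) m (Fin.last (k+1)) (Fin.last (k+1)) = zj (m - (k+1)) := by
    simp only [Ah, Matrix.of_apply, Fin.val_last]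
    simp
  have hsign1 : ((-1 : Polynomial Rt)) ^ ((((Fin.last k).castSucc : Fin (k+2)) : ℕ)
      + ((Fin.last (k+1) : Fin (k+2)) : ℕ)) = -1 := by
    simp only [Fin.coe_castSucc, Fin.val_last]
    rw [show k + (k + 1) = 2 * k + 1 by omega, pow_succ, pow_mul]
    norm_num
  have hsign2 : ((-1 : Polynomial Rt)) ^ (((Fin.last (k+1) : Fin (k+2)) : ℕ)
      + ((Fin.last (k+1) : Fin (k+2)) : ℕ)) = 1 := by
    simp only [Fin.val_last]
    rw [show (k + 1) + (k + 1) = 2 * (k + 1) by omega, pow_mul]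
    norm_num
  rw [hA1, hA2, hsign1, hsign2, Fin.succAbove_last, Ah_sub1, Ah_sub2]
  ring

lemma xpoly_zero : xpoly 0 = 1 := rfl

lemma det_Mhess (k : ℕ) : (Mhess k).det = cst (k.factorial : ℚ) * xpoly k := by
  cases k with
  | zero => simp [xpoly, Matrix.det_fin_zero, cst]
  | succ k =>
      rw [xpoly, if_neg (Nat.succ_ne_zero k)]
      rw [show (C (MvPolynomial.C (((k+1).factorial : ℚ)⁻¹)) : Polynomial Rt)
        = cst (((k+1).factorial : ℚ)⁻¹) from rfl]
      rw [← mul_assoc, cst_mul, mul_inv_cancel₀ (by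
        exact_mod_cast Nat.cast_ne_zero.mpr (Nat.factorial_ne_zero (k+1))), cst_one, one_mul]

lemma Ah_det_sum (k m : ℕ) :
    (Ah (k+1) m).det
      = cst (k.factorial : ℚ) * ∑ j ∈ Finset.range (k+1), zj (m - j) * xpoly j := by
  induction k with
  | zero =>
      rw [Ah_det_one]
      simp [cst, xpoly_zero]
  | succ k ih =>
      rw [Ah_rec, ih, det_Mhess, Finset.sum_range_succ (n := k + 1)]
      rw [show ((k + 1 : ℕ) : Polynomial Rt) = cst ((k+1 : ℕ) : ℚ) by simp [cst]]
      rw [Nat.factorial_succ]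
      push_cast
      rw [← cst_mul]
      ring

lemma newton (k : ℕ) :
    cst (k : ℚ) * xpoly k = ∑ j ∈ Finset.range k, zj (k - j) * xpoly j := by
  cases k with
  | zero => simp [cst_zero]
  | succ k =>
      have h1 : (Mhess (k+1)).det = (Ah (k+1) (k+1)).det := by rw [Mhess_eq_Ah]
      rw [det_Mhess, Ah_det_sum] at h1
      have h2 : cst ((k.factorial : ℚ)) * (cst ((k+1 : ℕ) : ℚ) * xpoly (k+1))
          = cst ((k.factorial : ℚ)) * ∑ j ∈ Finset.range (k+1), zj (k+1 - j) * xpoly j := by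
        rw [← h1, ← mul_assoc, cst_mul, Nat.factorial_succ]
        push_cast
        ring_nf
      have := cst_cancel (by exact_mod_cast Nat.factorial_ne_zero k) h2
      exact_mod_cast this

lemma pD_xpoly (p : ℕ) (hp : 1 ≤ p) (k : ℕ) :
    pD (2*p) (xpoly k)
      = if k < 2*p then 0 else cst (-(1/(2*p : ℚ))) * xpoly (k - 2*p) := by
  induction k using Nat.strong_induction_on with
  | _ K ih =>
  match K, ih with
  | 0, ih => rw [xpoly_zero, pD_one, if_pos (by omega)]
  | (k+1), ih =>
    set K := k + 1 with hK
    have hKne : ((K : ℕ) : ℚ) ≠ 0 := by positivity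
    have h2p : ((2 * p : ℕ) : ℚ) ≠ 0 := by positivity
    have hL : pD (2*p) (cst ((K : ℕ) : ℚ) * xpoly K)
        = cst ((K : ℕ) : ℚ) * pD (2*p) (xpoly K) := by
      rw [pD_mul, pD_cst, zero_mul, zero_add]
    have hmain : cst ((K : ℕ) : ℚ) * pD (2*p) (xpoly K)
        = (if 2*p ≤ K then -xpoly (K - 2*p) else 0)
          + cst (-(1/(2*p : ℚ))) * cst (((K - 2*p : ℕ)) : ℚ) * xpoly (K - 2*p) := by
      rw [← hL, newton K, pD_sum]
      have hterm : ∀ j ∈ Finset.range K,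
          pD (2*p) (zj (K - j) * xpoly j)
            = (if K - j = 2*p then -1 else 0) * xpoly j
              + zj (K - j) * pD (2*p) (xpoly j) := by
        intro j hj
        rw [pD_mul, pD_zj]
      rw [Finset.sum_congr rfl hterm, Finset.sum_add_distrib]
      congr 1
      · -- first sum
        by_cases h2 : 2*p ≤ K
        · rw [if_pos h2]
          rw [Finset.sum_eq_single_of_mem (K - 2*p)
            (Finset.mem_range.mpr (by omega))
            (fun j hj hne => by
              rw [if_neg (fun hh => hne (by
                have := Finset.mem_range.mp hj
                omega)), zero_mul])]
          rw [if_pos (by omega)]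
          ring
        · rw [if_neg h2]
          refine Finset.sum_eq_zero fun j hj => ?_
          have := Finset.mem_range.mp hj
          rw [if_neg (by omega), zero_mul]
      · -- second sum
        have hsplit : Finset.range K = Finset.Ico 0 (min (2*p) K) ∪ Finset.Ico (min (2*p) K) K := by
          rw [Finset.Ico_union_Ico_eq_Ico (Nat.zero_le _) (min_le_right _ _)]
          rw [Finset.range_eq_Ico]
        rw [hsplit, Finset.sum_union (by
          apply Finset.Ico_disjoint_Ico_consecutive)]
        have hfirst : ∑ j ∈ Finset.Ico 0 (min (2*p) K), zj (K - j) * pD (2*p) (xpoly j) = 0 := by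
          refine Finset.sum_eq_zero fun j hj => ?_
          have hj' := (Finset.mem_Ico.mp hj).2
          rw [ih j (by omega), if_pos (by omega), mul_zero]
        rw [hfirst, zero_add]
        by_cases h2 : 2*p ≤ K
        · have hmin : min (2*p) K = 2*p := min_eq_left h2
          rw [hmin]
          have hsec : ∑ j ∈ Finset.Ico (2*p) K, zj (K - j) * pD (2*p) (xpoly j)
              = cst (-(1/(2*p : ℚ))) * ∑ j ∈ Finset.Ico (2*p) K, zj (K - j) * xpoly (j - 2*p) := by
            rw [Finset.mul_sum]
            refine Finset.sum_congr rfl fun j hj => ?_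
            have hj1 := (Finset.mem_Ico.mp hj).1
            have hj2 := (Finset.mem_Ico.mp hj).2
            rw [ih j (by omega), if_neg (by omega)]
            ring
          rw [hsec]
          have hre : ∑ j ∈ Finset.Ico (2*p) K, zj (K - j) * xpoly (j - 2*p)
              = ∑ j ∈ Finset.range (K - 2*p), zj ((K - 2*p) - j) * xpoly j := by
            rw [Finset.sum_Ico_eq_sum_range]
            refine Finset.sum_congr rfl fun j hj => ?_
            have := Finset.mem_range.mp hj
            congr 1
            · congr 1
              omega
            · congr 1
              omega
          rw [hre, ← newton (K - 2*p), ← mul_assoc]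
        · have hmin : min (2*p) K = K := min_eq_right (by omega)
          rw [hmin, Finset.Ico_self, Finset.sum_empty,
            show K - 2*p = 0 from by omega]
          simp [cst_zero]
    by_cases h2 : 2*p ≤ K
    · rw [if_neg (by omega)]
      refine cst_cancel hKne ?_
      rw [hmain, if_pos h2]
      have hval : (-1 + (-(1/(2*p : ℚ))) * ((K - 2*p : ℕ) : ℚ))
          = ((K : ℕ) : ℚ) * (-(1/(2*p : ℚ))) := by
        rw [Nat.cast_sub h2]
        field_simp
        push_cast
        ring
      calc -xpoly (K - 2*p) + cst (-(1/(2*p : ℚ))) * cst (((K - 2*p : ℕ)) : ℚ) * xpoly (K - 2*p)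
          = cst (-1 + (-(1/(2*p : ℚ))) * ((K - 2*p : ℕ) : ℚ)) * xpoly (K - 2*p) := by
            rw [← cst_add, ← cst_mul]
            have hneg : (-xpoly (K - 2*p)) = cst (-1) * xpoly (K - 2*p) := by
              rw [show cst (-1) = -1 by simp [cst]]
              ring
            rw [hneg, add_mul]
        _ = cst (((K : ℕ) : ℚ)) * (cst (-(1/(2*p : ℚ))) * xpoly (K - 2*p)) := by
            rw [hval, ← cst_mul, mul_assoc]
    · rw [if_pos (by omega)]
      refine cst_cancel hKne ?_
      rw [hmain, if_neg h2, mul_zero]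
      have : K - 2*p = 0 := by omega
      rw [this]
      simp [cst_zero]

lemma pD_pow_eq_zero (v : ℕ) (f : Polynomial Rt) (hf : pD v f = 0) (n : ℕ) :
    pD v (f ^ n) = 0 := by
  induction n with
  | zero => simpa using pD_one v
  | succ n ih => rw [pow_succ, pD_mul, ih, hf, zero_mul, mul_zero, add_zero]

lemma pD_comp (v : ℕ) (a : Rt) (ha : MvPolynomial.pderiv v a = 0) (f : Polynomial Rt) :
    pD v (f.comp (X + C a)) = (pD v f).comp (X + C a) := by
  have hg : pD v (X + C a) = 0 := by
    rw [pD_add, pD_X, pD_C, ha, map_zero, add_zero]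
  induction f using Polynomial.induction_on with
  | C b => rw [C_comp, pD_C, C_comp]
  | add f g hf hg' => rw [add_comp, pD_add, pD_add, add_comp, hf, hg']
  | monomial n b _ =>
      rw [mul_comp, C_comp, pow_comp, X_comp, pD_mul, pD_C,
        pD_pow_eq_zero v _ hg, mul_zero, add_zero,
        pD_C_mul_Xpow, mul_comp, C_comp, pow_comp, X_comp]

lemma pD_Qcas (p : ℕ) (hp : 1 ≤ p) (n : ℕ) : pD (2*p) (Qcas n) = 0 := by
  set A : Matrix (Fin n) (Fin n) (Polynomial Rt) :=
    Matrix.of (fun i j : Fin n => (xpoly (2 * (i : ℕ) + 1)).comp (X + C ((j : ℕ) : Rt)))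
    with hA
  have hQ : Qcas n = A.det := rfl
  rw [hQ, pD_det]
  refine Finset.sum_eq_zero fun r _ => ?_
  have hca : ∀ j : Fin n, MvPolynomial.pderiv (2*p) (((j : ℕ) : Rt)) = 0 := by
    intro j
    rw [show (((j : ℕ)) : Rt) = MvPolynomial.C (((j : ℕ) : ℚ)) by
      simp, MvPolynomial.pderiv_C]
  have hAij : ∀ (i j : Fin n), pD (2*p) (A i j)
      = (pD (2*p) (xpoly (2 * (i : ℕ) + 1))).comp (X + C ((j : ℕ) : Rt)) := by
    intro i j
    rw [hA]
    exact pD_comp (2*p) _ (hca j) _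
  by_cases hr : (r : ℕ) < p
  · refine Matrix.det_eq_zero_of_row_eq_zero r fun j => ?_
    rw [Matrix.updateRow_self, hAij, pD_xpoly p hp, if_pos (by omega), zero_comp]
  · have hrn := r.isLt
    set r' : Fin n := ⟨(r : ℕ) - p, by omega⟩ with hr'
    have hridx : (2 * (r : ℕ) + 1) - 2*p = 2 * ((r' : Fin n) : ℕ) + 1 := by
      simp only [hr']
      omega
    have hrow : (fun j => pD (2*p) (A r j)) = (cst (-(1/(2*p : ℚ)))) • (A r') := by
      funext j
      rw [hAij, pD_xpoly p hp, if_neg (by omega), hridx, mul_comp]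
      have hcc : (cst (-(1/(2*p : ℚ)))).comp (X + C ((j : ℕ) : Rt))
          = cst (-(1/(2*p : ℚ))) := C_comp
      rw [hcc, Pi.smul_apply, smul_eq_mul, hA]
      rfl
    rw [hrow, Matrix.det_updateRow_smul,
      Matrix.det_updateRow_eq_zero (by
        intro h
        apply absurd (congrArg (fun x : Fin n => (x : ℕ)) h)
        simp only [hr']
        omega), mul_zero]

end AuxProof

/-- the Casoratian `Q_n` does not depend on the even-indexed
variables: the formal partial derivative of every coefficient of `Q_n` with
respect to `t_{2p}` vanishes, for all `n ≥ 1` and `p ≥ 1`. -/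

theorem Qcas_indep_even_times :
    ∀ n : ℕ, 1 ≤ n → ∀ p : ℕ, 1 ≤ p → ∀ m : ℕ,
      MvPolynomial.pderiv (2 * p) ((Qcas n).coeff m) = 0 := by
  intro n _ p hp m
  have h1 := pD_coeff (2 * p) (Qcas n) m
  rw [pD_Qcas p hp n] at h1
  simpa using h1.symm
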